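/- Let V : ℝ → ℝ be convex and let ω₀ < ω₁ < ... < ω_{2p} be an increasing finite sequence of real numbers of odd length 2p+1. Then V(∑_{k=0}^{2p} (−1)^k ω_k) ≤ ∑_{k=0}^{2p} (−1)^k V(ω_k). -/

import Mathlib

lemma key_convex_three (V : ℝ → ℝ) (hV : ConvexOn ℝ Set.univ V)
    {a b c : ℝ} (hab : a ≤ b) (hbc : b ≤ c) :
    V (a - b + c) ≤ V a - V b + V c := by
  rcases eq_or_lt_of_le (hab.trans hbc) with h | h
  · subst h
    have hb : b = a := le_antisymm hbc hab
    subst hb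
    have : b - b + b = b := by ring
    rw [this]; linarith
  · set t : ℝ := (c - b) / (c - a) with ht
    have hca : 0 < c - a := by linarith
    have ht0 : 0 ≤ t := div_nonneg (by linarith) hca.le
    have ht1 : t ≤ 1 := by
      rw [div_le_one hca]; linarith
    have h1 := hV.2 (Set.mem_univ a) (Set.mem_univ c) ht0 (by linarith : (0:ℝ) ≤ 1 - t)
      (by ring)
    have h2 := hV.2 (Set.mem_univ a) (Set.mem_univ c) (by linarith : (0:ℝ) ≤ 1 - t) ht0
      (by ring)
    have e1 : t • a + (1 - t) • c = b := by
      simp only [smul_eq_mul, ht]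
      field_simp [hca.ne']
      ring
    have e2 : (1 - t) • a + t • c = a - b + c := by
      simp only [smul_eq_mul, ht]
      field_simp [hca.ne']
      ring
    rw [e1] at h1
    rw [e2] at h2
    simp only [smul_eq_mul] at h1 h2
    linarith

lemma aux_alt (V : ℝ → ℝ) (hV : ConvexOn ℝ Set.univ V) :
    ∀ p : ℕ, ∀ ω : ℕ → ℝ, Monotone ω →
      ω 0 ≤ (∑ k ∈ Finset.range (2 * p + 1), (-1 : ℝ) ^ k * ω k) ∧
      V (∑ k ∈ Finset.range (2 * p + 1), (-1 : ℝ) ^ k * ω k) ≤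
        ∑ k ∈ Finset.range (2 * p + 1), (-1 : ℝ) ^ k * V (ω k) := by
  intro p
  induction p with
  | zero => intro ω _; simp
  | succ p ih =>
    intro ω hm
    have hsplit : ∀ f : ℕ → ℝ,
        (∑ k ∈ Finset.range (2 * (p + 1) + 1), (-1 : ℝ) ^ k * f k)
          = f 0 - f 1 + ∑ k ∈ Finset.range (2 * p + 1), (-1 : ℝ) ^ k * f (k + 2) := by
      intro f
      have h1 : 2 * (p + 1) + 1 = (2 * p + 1) + 1 + 1 := by ring
      rw [h1, Finset.sum_range_succ', Finset.sum_range_succ']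
      have hc : ∀ i ∈ Finset.range (2 * p + 1),
          (-1 : ℝ) ^ (i + 1 + 1) * f (i + 1 + 1) = (-1 : ℝ) ^ i * f (i + 2) := by
        intro i _
        rw [pow_succ, pow_succ]
        ring_nf
      rw [Finset.sum_congr rfl hc]
      norm_num
      ring
    obtain ⟨hS0, hSV⟩ := ih (fun k => ω (k + 2)) (fun x y hxy => hm (by omega))
    set S : ℝ := ∑ k ∈ Finset.range (2 * p + 1), (-1 : ℝ) ^ k * ω (k + 2) with hS
    have hω01 : ω 0 ≤ ω 1 := hm (by omega)
    have hω12 : ω 1 ≤ ω 2 := hm (by omega)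
    have h1S : ω 1 ≤ S := le_trans hω12 hS0
    constructor
    · rw [hsplit ω]; linarith
    · rw [hsplit ω, hsplit (fun k => V (ω k))]
      have := key_convex_three V hV hω01 h1S
      calc V (ω 0 - ω 1 + S) ≤ V (ω 0) - V (ω 1) + V S := this
        _ ≤ V (ω 0) - V (ω 1) + ∑ k ∈ Finset.range (2 * p + 1), (-1:ℝ)^k * V (ω (k+2)) := by
            linarith

/-- if `V : ℝ → ℝ` is convex and `ω₀ < ω₁ < ⋯ < ω_{2p}` is an
increasing sequence of odd length `2p+1`, then
`V(∑ (−1)^k ω_k) ≤ ∑ (−1)^k V(ω_k)`. -/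
theorem convex_alternating_sum (V : ℝ → ℝ) (hV : ConvexOn ℝ Set.univ V)
    (p : ℕ) (ω : Fin (2 * p + 1) → ℝ) (hω : StrictMono ω) :
    V (∑ k : Fin (2 * p + 1), (-1 : ℝ) ^ (k : ℕ) * ω k) ≤
      ∑ k : Fin (2 * p + 1), (-1 : ℝ) ^ (k : ℕ) * V (ω k) := by
  set f : ℕ → ℝ := fun n => ω ⟨min n (2 * p), by omega⟩ with hf
  have hfm : Monotone f := by
    intro x y hxy
    exact (hω.monotone) (by simp [Fin.le_def]; omega)
  have hagree : ∀ k : Fin (2 * p + 1), f (k : ℕ) = ω k := by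
    intro k
    have : min (k : ℕ) (2 * p) = (k : ℕ) := by omega
    simp [hf, this]
  have e1 : (∑ k : Fin (2 * p + 1), (-1 : ℝ) ^ (k : ℕ) * ω k)
      = ∑ k ∈ Finset.range (2 * p + 1), (-1 : ℝ) ^ k * f k := by
    rw [Finset.sum_range fun k => (-1 : ℝ) ^ k * f k]
    exact Finset.sum_congr rfl fun k _ => by rw [hagree k]
  have e2 : (∑ k : Fin (2 * p + 1), (-1 : ℝ) ^ (k : ℕ) * V (ω k))
      = ∑ k ∈ Finset.range (2 * p + 1), (-1 : ℝ) ^ k * V (f k) := by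
    rw [Finset.sum_range fun k => (-1 : ℝ) ^ k * V (f k)]
    exact Finset.sum_congr rfl fun k _ => by rw [hagree k]
  rw [e1, e2]
  exact (aux_alt V hV p f hfm).2
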